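/- arXiv:2406.18500 — 3 statements merged into one kernel-verified Lean document; each statement's English description precedes it below -/
import Mathlib

section
/- There exists a constant N > 0 depending only on p such that for all r ∈ ℝ and all n ≥ 1: |φ_n(r)| ≤ N|r|^p, |φ_n'(r)| ≤ N|r|^{p-1}, and |φ_n''(r)| ≤ N|r|^{p-2}. -/
noncomputable def phi (p : ℝ) (n : ℕ) (r : ℝ) : ℝ :=
  if |r| < n then |r| ^ p
  else (n : ℝ) ^ (p - 2) * (p * (p - 1) / 2) * (|r| - n) ^ 2
      + p * (n : ℝ) ^ (p - 1) * (|r| - n) + (n : ℝ) ^ p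

noncomputable def phiD (p : ℝ) (n : ℕ) (r : ℝ) : ℝ :=
  if |r| < n then p * r * |r| ^ (p - 2)
  else Real.sign r * ((n : ℝ) ^ (p - 2) * (p * (p - 1)) * (|r| - n) + p * (n : ℝ) ^ (p - 1))

noncomputable def phiDD (p : ℝ) (n : ℕ) (r : ℝ) : ℝ :=
  if |r| < n then p * (p - 1) * |r| ^ (p - 2)
  else (n : ℝ) ^ (p - 2) * (p * (p - 1))

lemma abs_rpow_eq (x q : ℝ) : |x| ^ q = (x ^ 2) ^ (q / 2) := by
  rw [← Real.sqrt_sq_eq_abs, Real.sqrt_eq_rpow, ← Real.rpow_mul (sq_nonneg x)]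
  ring_nf

lemma hasDerivAt_F (p : ℝ) (hp : 2 ≤ p) (x : ℝ) :
    HasDerivAt (fun x : ℝ => (x ^ 2) ^ (p / 2)) (p * x * (x ^ 2) ^ ((p - 2) / 2)) x := by
  have h := (Real.hasDerivAt_rpow_const (p := p / 2) (x := x ^ 2)
    (Or.inr (by linarith))).comp x (hasDerivAt_pow 2 x)
  refine h.congr_deriv (Eq.symm ?_)
  rw [show p / 2 - 1 = (p - 2) / 2 by ring]; push_cast; ring

lemma hasDerivAt_G (p : ℝ) (hp : 2 ≤ p) (x : ℝ) :
    HasDerivAt (fun x : ℝ => p * x * (x ^ 2) ^ ((p - 2) / 2))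
      (p * (p - 1) * (x ^ 2) ^ ((p - 2) / 2)) x := by
  rcases eq_or_ne x 0 with rfl | hx
  · rcases eq_or_lt_of_le hp with rfl | hp2
    · have he : (fun x : ℝ => 2 * x * (x ^ 2) ^ ((2 - 2 : ℝ) / 2)) = fun x : ℝ => 2 * x := by
        funext y; norm_num
      rw [he]
      norm_num
      simpa using (hasDerivAt_id (0 : ℝ)).const_mul 2
    · have hβ : 0 < (p - 2) / 2 := by linarith
      have h0 : (((0 : ℝ)) ^ 2) ^ ((p - 2) / 2) = 0 := by
        rw [show ((0 : ℝ) ^ 2) = 0 by norm_num, Real.zero_rpow hβ.ne']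
      rw [hasDerivAt_iff_tendsto_slope,
        show p * (p - 1) * (((0 : ℝ)) ^ 2) ^ ((p - 2) / 2) = 0 by rw [h0]; ring]
      have c1 : ContinuousAt (fun y : ℝ => p * (y ^ 2) ^ ((p - 2) / 2)) 0 :=
        continuousAt_const.mul ((Real.continuousAt_rpow_const _ _ (Or.inr hβ.le)).comp
          ((continuous_pow 2).continuousAt))
      have hc : Filter.Tendsto (fun y : ℝ => p * (y ^ 2) ^ ((p - 2) / 2))
          (nhdsWithin 0 {(0 : ℝ)}ᶜ) (nhds 0) := by
        have := c1.tendsto.mono_left (nhdsWithin_le_nhds (s := {(0 : ℝ)}ᶜ))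
        simpa [Real.zero_rpow hβ.ne'] using this
      refine hc.congr' ?_
      filter_upwards [self_mem_nhdsWithin] with y hy
      have hy' : y ≠ 0 := hy
      rw [slope_def_field]
      field_simp
      ring
  · have hx2 : (0 : ℝ) < x ^ 2 := by positivity
    have h1 : HasDerivAt (fun x : ℝ => (x ^ 2) ^ ((p - 2) / 2))
        ((p - 2) / 2 * (x ^ 2) ^ ((p - 2) / 2 - 1) * (2 * x ^ 1)) x := by
      have := (Real.hasDerivAt_rpow_const (p := (p - 2) / 2) (x := x ^ 2)
        (Or.inl (by positivity))).comp x (hasDerivAt_pow 2 x)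
      exact this.congr_deriv (by push_cast; ring)
    have h2 : HasDerivAt (fun x : ℝ => p * x) p x := by
      simpa using (hasDerivAt_id x).const_mul p
    have h3 := h2.mul h1
    refine h3.congr_deriv (Eq.symm ?_)
    have key : (x ^ 2) * (x ^ 2) ^ ((p - 2) / 2 - 1) = (x ^ 2) ^ ((p - 2) / 2) := by
      nth_rewrite 2 [show (p - 2) / 2 = 1 + ((p - 2) / 2 - 1) by ring]
      rw [Real.rpow_add hx2, Real.rpow_one]
    linear_combination (-(p * (p - 2))) * key

lemma phi_neg (p : ℝ) (n : ℕ) (r : ℝ) : phi p n (-r) = phi p n r := by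
  simp [phi, abs_neg]

lemma phiD_neg (p : ℝ) (n : ℕ) (r : ℝ) : phiD p n (-r) = -phiD p n r := by
  simp only [phiD, abs_neg, Real.sign_neg]
  split <;> ring

lemma phiDD_neg (p : ℝ) (n : ℕ) (r : ℝ) : phiDD p n (-r) = phiDD p n r := by
  simp [phiDD, abs_neg]

lemma even_hasDerivAt {f : ℝ → ℝ} (hf : ∀ x, f (-x) = f x) {d r : ℝ}
    (h : HasDerivAt f d r) : HasDerivAt f (-d) (-r) := by
  have h' : HasDerivAt f d (-(-r)) := by rwa [neg_neg]
  have h2 := h'.comp (-r) (hasDerivAt_neg (-r))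
  have he : (f ∘ fun y : ℝ => -y) = f := funext fun y => hf y
  rw [he] at h2
  simpa using h2

lemma odd_hasDerivAt {f : ℝ → ℝ} (hf : ∀ x, f (-x) = -f x) {d r : ℝ}
    (h : HasDerivAt f d r) : HasDerivAt f d (-r) := by
  have h' : HasDerivAt f d (-(-r)) := by rwa [neg_neg]
  have h2 := h'.comp (-r) (hasDerivAt_neg (-r))
  have he : (f ∘ fun y : ℝ => -y) = fun y => -f y := funext fun y => hf y
  rw [he] at h2
  have h3 := h2.neg
  simpa [Pi.neg_def] using h3

lemma hasDerivAt_phi_nonneg (p : ℝ) (hp : 2 ≤ p) (n : ℕ) (hn : 1 ≤ n) {r : ℝ} (hr : 0 ≤ r) :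
    HasDerivAt (phi p n) (phiD p n r) r := by
  have hc1 : (1 : ℝ) ≤ (n : ℝ) := by exact_mod_cast hn
  have hc0 : (0 : ℝ) < (n : ℝ) := by linarith
  have hFeq : ∀ x : ℝ, 0 < x → x ≤ (n : ℝ) → phi p n x = (x ^ 2) ^ (p / 2) := by
    intro x hx0 hxc
    rcases lt_or_eq_of_le hxc with hlt | heq
    · rw [phi, if_pos (by rwa [abs_of_pos hx0]), abs_rpow_eq]
    · rw [phi, if_neg (by rw [abs_of_pos hx0, heq]; exact lt_irrefl _), abs_of_pos hx0,
        show (x ^ 2) ^ (p / 2) = |x| ^ p from (abs_rpow_eq x p).symm, abs_of_pos hx0, heq]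
      ring
  rcases lt_trichotomy r (n : ℝ) with h | h | h
  · -- interior, power branch
    have heq : phi p n =ᶠ[nhds r] fun x => (x ^ 2) ^ (p / 2) := by
      have hopen : ∀ᶠ x in nhds r, |x| < (n : ℝ) :=
        (isOpen_lt continuous_abs continuous_const).eventually_mem
          (by simpa [abs_of_nonneg hr] using h)
      filter_upwards [hopen] with x hx
      rw [phi, if_pos hx, abs_rpow_eq]
    have hd := (hasDerivAt_F p hp r).congr_of_eventuallyEq heq
    refine hd.congr_deriv (Eq.symm ?_)
    rw [phiD, if_pos (by simpa [abs_of_nonneg hr] using h), abs_rpow_eq]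
  · -- boundary
    subst h
    have key : (((n : ℝ)) ^ 2) ^ ((p - 2) / 2) = (n : ℝ) ^ (p - 2) := by
      rw [← abs_rpow_eq, abs_of_pos hc0]
    have keyF : p * (n : ℝ) * (((n : ℝ)) ^ 2) ^ ((p - 2) / 2) = p * (n : ℝ) ^ (p - 1) := by
      rw [key, show p - 1 = (p - 2) + 1 by ring, Real.rpow_add_one hc0.ne']
      ring
    have left : HasDerivWithinAt (phi p n) (p * (n : ℝ) ^ (p - 1)) (Set.Iic (n : ℝ)) (n : ℝ) := by
      have hF := ((hasDerivAt_F p hp (n : ℝ)).congr_deriv keyF).hasDerivWithinAt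
        (s := Set.Iic (n : ℝ))
      refine hF.congr_of_eventuallyEq ?_ (hFeq _ hc0 le_rfl)
      filter_upwards [self_mem_nhdsWithin,
        mem_nhdsWithin_of_mem_nhds (Ioi_mem_nhds hc0)] with x hx1 hx2
      exact hFeq x hx2 hx1
    have hQd : HasDerivAt (fun x : ℝ => (n : ℝ) ^ (p - 2) * (p * (p - 1) / 2) * (x - n) ^ 2
        + p * (n : ℝ) ^ (p - 1) * (x - n) + (n : ℝ) ^ p) (p * (n : ℝ) ^ (p - 1)) (n : ℝ) := by
      have hx := (hasDerivAt_id (n : ℝ)).sub_const (n : ℝ)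
      have h2 := (((hx.pow 2).const_mul ((n : ℝ) ^ (p - 2) * (p * (p - 1) / 2))).add
        (hx.const_mul (p * (n : ℝ) ^ (p - 1)))).add_const ((n : ℝ) ^ p)
      refine h2.congr_deriv (Eq.symm ?_)
      simp
    have right : HasDerivWithinAt (phi p n) (p * (n : ℝ) ^ (p - 1)) (Set.Ici (n : ℝ)) (n : ℝ) := by
      refine hQd.hasDerivWithinAt.congr ?_ ?_
      · intro x hx
        have hx0 : 0 < x := lt_of_lt_of_le hc0 hx
        rw [phi, if_neg (by rw [abs_of_pos hx0]; exact not_lt.2 hx), abs_of_pos hx0]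
      · rw [phi, if_neg (by rw [abs_of_pos hc0]; exact lt_irrefl _), abs_of_pos hc0]
    have hu := left.union right
    rw [Set.Iic_union_Ici, hasDerivWithinAt_univ] at hu
    refine hu.congr_deriv ?_
    rw [phiD, if_neg (by rw [abs_of_pos hc0]; exact lt_irrefl _), abs_of_pos hc0,
      Real.sign_of_pos hc0]
    ring
  · -- outer branch
    have hr0 : 0 < r := by linarith
    have heq : phi p n =ᶠ[nhds r] fun x =>
        (n : ℝ) ^ (p - 2) * (p * (p - 1) / 2) * (x - n) ^ 2
        + p * (n : ℝ) ^ (p - 1) * (x - n) + (n : ℝ) ^ p := by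
      have hopen : ∀ᶠ x in nhds r, (n : ℝ) < x :=
        (isOpen_lt continuous_const continuous_id).eventually_mem h
      filter_upwards [hopen] with x hx
      have hx0 : 0 < x := by linarith
      rw [phi, if_neg (by rw [abs_of_pos hx0]; exact not_lt.2 hx.le), abs_of_pos hx0]
    have hQd : HasDerivAt (fun x : ℝ => (n : ℝ) ^ (p - 2) * (p * (p - 1) / 2) * (x - n) ^ 2
        + p * (n : ℝ) ^ (p - 1) * (x - n) + (n : ℝ) ^ p)
        ((n : ℝ) ^ (p - 2) * (p * (p - 1)) * (r - n) + p * (n : ℝ) ^ (p - 1)) r := by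
      have hx := (hasDerivAt_id r).sub_const (n : ℝ)
      have h2 := (((hx.pow 2).const_mul ((n : ℝ) ^ (p - 2) * (p * (p - 1) / 2))).add
        (hx.const_mul (p * (n : ℝ) ^ (p - 1)))).add_const ((n : ℝ) ^ p)
      refine h2.congr_deriv (Eq.symm ?_)
      simp only [id_eq]; push_cast; ring
    have hd := hQd.congr_of_eventuallyEq heq
    refine hd.congr_deriv ?_
    rw [phiD, if_neg (by rw [abs_of_pos hr0]; linarith), abs_of_pos hr0,
      Real.sign_of_pos hr0]
    ring

lemma hasDerivAt_phiD_nonneg (p : ℝ) (hp : 2 ≤ p) (n : ℕ) (hn : 1 ≤ n) {r : ℝ} (hr : 0 ≤ r) :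
    HasDerivAt (phiD p n) (phiDD p n r) r := by
  have hc1 : (1 : ℝ) ≤ (n : ℝ) := by exact_mod_cast hn
  have hc0 : (0 : ℝ) < (n : ℝ) := by linarith
  have key : ∀ x : ℝ, 0 < x → ((x) ^ 2) ^ ((p - 2) / 2) = x ^ (p - 2) := by
    intro x hx0
    rw [← abs_rpow_eq, abs_of_pos hx0]
  have hGeq : ∀ x : ℝ, 0 < x → x ≤ (n : ℝ) → phiD p n x = p * x * (x ^ 2) ^ ((p - 2) / 2) := by
    intro x hx0 hxc
    rcases lt_or_eq_of_le hxc with hlt | heq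
    · rw [phiD, if_pos (by rwa [abs_of_pos hx0]), abs_rpow_eq]
    · rw [phiD, if_neg (by rw [abs_of_pos hx0, heq]; exact lt_irrefl _), abs_of_pos hx0,
        Real.sign_of_pos hx0, key x hx0, heq, show p - 1 = (p - 2) + 1 by ring,
        Real.rpow_add_one hc0.ne']
      ring
  have hLeq : ∀ x : ℝ, (n : ℝ) ≤ x → phiD p n x =
      (n : ℝ) ^ (p - 2) * (p * (p - 1)) * (x - n) + p * (n : ℝ) ^ (p - 1) := by
    intro x hx
    have hx0 : 0 < x := lt_of_lt_of_le hc0 hx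
    rw [phiD, if_neg (by rw [abs_of_pos hx0]; exact not_lt.2 hx), abs_of_pos hx0,
      Real.sign_of_pos hx0]
    ring
  have hLd : ∀ x : ℝ, HasDerivAt (fun y : ℝ =>
      (n : ℝ) ^ (p - 2) * (p * (p - 1)) * (y - n) + p * (n : ℝ) ^ (p - 1))
      ((n : ℝ) ^ (p - 2) * (p * (p - 1))) x := by
    intro x
    have hx := (hasDerivAt_id x).sub_const (n : ℝ)
    have h2 := (hx.const_mul ((n : ℝ) ^ (p - 2) * (p * (p - 1)))).add_const
      (p * (n : ℝ) ^ (p - 1))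
    simpa using h2
  rcases lt_trichotomy r (n : ℝ) with h | h | h
  · have heq : phiD p n =ᶠ[nhds r] fun x => p * x * (x ^ 2) ^ ((p - 2) / 2) := by
      have hopen : ∀ᶠ x in nhds r, |x| < (n : ℝ) :=
        (isOpen_lt continuous_abs continuous_const).eventually_mem
          (by simpa [abs_of_nonneg hr] using h)
      filter_upwards [hopen] with x hx
      rw [phiD, if_pos hx, abs_rpow_eq]
    have hd := (hasDerivAt_G p hp r).congr_of_eventuallyEq heq
    refine hd.congr_deriv ?_
    rw [phiDD, if_pos (by simpa [abs_of_nonneg hr] using h), abs_rpow_eq]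
  · subst h
    have keyG : p * (p - 1) * (((n : ℝ)) ^ 2) ^ ((p - 2) / 2)
        = (n : ℝ) ^ (p - 2) * (p * (p - 1)) := by
      rw [key _ hc0]; ring
    have left : HasDerivWithinAt (phiD p n) ((n : ℝ) ^ (p - 2) * (p * (p - 1)))
        (Set.Iic (n : ℝ)) (n : ℝ) := by
      have hG := ((hasDerivAt_G p hp (n : ℝ)).congr_deriv keyG).hasDerivWithinAt
        (s := Set.Iic (n : ℝ))
      refine hG.congr_of_eventuallyEq ?_ (hGeq _ hc0 le_rfl)
      filter_upwards [self_mem_nhdsWithin,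
        mem_nhdsWithin_of_mem_nhds (Ioi_mem_nhds hc0)] with x hx1 hx2
      exact hGeq x hx2 hx1
    have right : HasDerivWithinAt (phiD p n) ((n : ℝ) ^ (p - 2) * (p * (p - 1)))
        (Set.Ici (n : ℝ)) (n : ℝ) := by
      refine (hLd (n : ℝ)).hasDerivWithinAt.congr ?_ ?_
      · intro x hx; exact hLeq x hx
      · exact hLeq _ le_rfl
    have hu := left.union right
    rw [Set.Iic_union_Ici, hasDerivWithinAt_univ] at hu
    refine hu.congr_deriv ?_
    rw [phiDD, if_neg (by rw [abs_of_pos hc0]; exact lt_irrefl _)]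
  · have hr0 : 0 < r := by linarith
    have heq : phiD p n =ᶠ[nhds r] fun x =>
        (n : ℝ) ^ (p - 2) * (p * (p - 1)) * (x - n) + p * (n : ℝ) ^ (p - 1) := by
      have hopen : ∀ᶠ x in nhds r, (n : ℝ) < x :=
        (isOpen_lt continuous_const continuous_id).eventually_mem h
      filter_upwards [hopen] with x hx
      exact hLeq x hx.le
    have hd := (hLd r).congr_of_eventuallyEq heq
    refine hd.congr_deriv ?_
    rw [phiDD, if_neg (by rw [abs_of_pos hr0]; linarith)]

lemma hasDerivAt_phi (p : ℝ) (hp : 2 ≤ p) (n : ℕ) (hn : 1 ≤ n) (r : ℝ) :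
    HasDerivAt (phi p n) (phiD p n r) r := by
  rcases le_or_gt 0 r with hr | hr
  · exact hasDerivAt_phi_nonneg p hp n hn hr
  · have h := hasDerivAt_phi_nonneg p hp n hn (r := -r) (by linarith)
    have h2 := even_hasDerivAt (phi_neg p n) h
    rw [neg_neg, phiD_neg, neg_neg] at h2
    exact h2
lemma hasDerivAt_phiD (p : ℝ) (hp : 2 ≤ p) (n : ℕ) (hn : 1 ≤ n) (r : ℝ) :
    HasDerivAt (phiD p n) (phiDD p n r) r := by
  rcases le_or_gt 0 r with hr | hr
  · exact hasDerivAt_phiD_nonneg p hp n hn hr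
  · have h := hasDerivAt_phiD_nonneg p hp n hn (r := -r) (by linarith)
    have h2 := odd_hasDerivAt (phiD_neg p n) h
    rw [neg_neg, phiDD_neg] at h2
    exact h2

lemma bound_phi (p : ℝ) (hp : 2 ≤ p) (n : ℕ) (hn : 1 ≤ n) (r : ℝ) :
    |phi p n r| ≤ (p + 1) ^ 2 * |r| ^ p := by
  have hc1 : (1 : ℝ) ≤ (n : ℝ) := by exact_mod_cast hn
  have hx0 : (0 : ℝ) ≤ |r| := abs_nonneg r
  rw [phi]
  split_ifs with h
  · rw [abs_of_nonneg (Real.rpow_nonneg hx0 p)]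
    nlinarith [mul_le_mul_of_nonneg_right (show (1:ℝ) ≤ (p + 1) ^ 2 by nlinarith)
      (Real.rpow_nonneg hx0 p)]
  · have hcx : (n : ℝ) ≤ |r| := not_lt.1 h
    have hx1 : (1 : ℝ) ≤ |r| := le_trans hc1 hcx
    have hx0' : (0 : ℝ) < |r| := by linarith
    have e1 : (n : ℝ) ^ (p - 2) ≤ |r| ^ (p - 2) :=
      Real.rpow_le_rpow (by positivity) hcx (by linarith)
    have e2 : (n : ℝ) ^ (p - 1) ≤ |r| ^ (p - 1) :=
      Real.rpow_le_rpow (by positivity) hcx (by linarith)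
    have e3 : (n : ℝ) ^ p ≤ |r| ^ p :=
      Real.rpow_le_rpow (by positivity) hcx (by linarith)
    have s1 : |r| ^ (p - 2) * |r| ^ 2 = |r| ^ p := by
      rw [← Real.rpow_natCast |r| 2, ← Real.rpow_add hx0']
      norm_num
    have s2 : |r| ^ (p - 1) * |r| = |r| ^ p := by
      rw [← Real.rpow_add_one hx0'.ne' (p - 1)]
      norm_num
    have q1 : (|r| - n) ^ 2 ≤ |r| ^ 2 := by nlinarith
    have q2 : |r| - n ≤ |r| := by linarith
    have t1 : (n : ℝ) ^ (p - 2) * (|r| - n) ^ 2 ≤ |r| ^ p := by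
      calc (n : ℝ) ^ (p - 2) * (|r| - n) ^ 2 ≤ |r| ^ (p - 2) * |r| ^ 2 :=
            mul_le_mul e1 q1 (by positivity) (by positivity)
        _ = |r| ^ p := s1
    have t2 : (n : ℝ) ^ (p - 1) * (|r| - n) ≤ |r| ^ p := by
      calc (n : ℝ) ^ (p - 1) * (|r| - n) ≤ |r| ^ (p - 1) * |r| :=
            mul_le_mul e2 q2 (by linarith) (by positivity)
        _ = |r| ^ p := s2
    have hnn : 0 ≤ (n : ℝ) ^ (p - 2) * (p * (p - 1) / 2) * (|r| - n) ^ 2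
        + p * (n : ℝ) ^ (p - 1) * (|r| - n) + (n : ℝ) ^ p := by
      have h6 : 0 ≤ |r| - n := by linarith
      have h7 : (0 : ℝ) ≤ (n : ℝ) ^ (p - 2) := by positivity
      have h8 : (0 : ℝ) ≤ (n : ℝ) ^ (p - 1) := by positivity
      have h9 : (0 : ℝ) ≤ (n : ℝ) ^ p := by positivity
      have hA : 0 ≤ (n : ℝ) ^ (p - 2) * (p * (p - 1) / 2) * (|r| - n) ^ 2 :=
        mul_nonneg (mul_nonneg h7 (by nlinarith)) (sq_nonneg _)
      have hB : 0 ≤ p * (n : ℝ) ^ (p - 1) * (|r| - n) :=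
        mul_nonneg (mul_nonneg (by linarith) h8) h6
      linarith
    rw [abs_of_nonneg hnn]
    have h4 : (0 : ℝ) ≤ p * (p - 1) / 2 := by nlinarith
    have h5 : p * (p - 1) / 2 + p + 1 ≤ (p + 1) ^ 2 := by nlinarith
    nlinarith [t1, t2, e3, Real.rpow_nonneg hx0 p, mul_le_mul_of_nonneg_left t1 h4,
      mul_le_mul_of_nonneg_left t2 (by linarith : (0:ℝ) ≤ p)]

lemma bound_phiD (p : ℝ) (hp : 2 ≤ p) (n : ℕ) (hn : 1 ≤ n) (r : ℝ) :
    |phiD p n r| ≤ (p + 1) ^ 2 * |r| ^ (p - 1) := by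
  have hc1 : (1 : ℝ) ≤ (n : ℝ) := by exact_mod_cast hn
  have hx0 : (0 : ℝ) ≤ |r| := abs_nonneg r
  rw [phiD]
  split_ifs with h
  · rcases eq_or_ne r 0 with rfl | hr0
    · simp [Real.rpow_nonneg]
      positivity
    · have hx0' : (0 : ℝ) < |r| := abs_pos.2 hr0
      have s3 : |r| * |r| ^ (p - 2) = |r| ^ (p - 1) := by
        rw [show p - 1 = (p - 2) + 1 by ring, Real.rpow_add_one hx0'.ne']
        ring
      have : |p * r * |r| ^ (p - 2)| = p * |r| * |r| ^ (p - 2) := by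
        rw [abs_mul, abs_mul, abs_of_nonneg (by linarith : (0:ℝ) ≤ p),
          abs_of_nonneg (Real.rpow_nonneg hx0 _)]
      rw [this]
      have : p * |r| * |r| ^ (p - 2) = p * |r| ^ (p - 1) := by rw [mul_assoc, s3]
      rw [this]
      have hple : p ≤ (p + 1) ^ 2 := by nlinarith
      exact mul_le_mul_of_nonneg_right hple (Real.rpow_nonneg hx0 _)
  · have hcx : (n : ℝ) ≤ |r| := not_lt.1 h
    have hx1 : (1 : ℝ) ≤ |r| := le_trans hc1 hcx
    have hx0' : (0 : ℝ) < |r| := by linarith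
    have hr0 : r ≠ 0 := by intro hr; rw [hr] at hx0'; simp at hx0'
    have hs : |Real.sign r| ≤ 1 := by
      rcases lt_trichotomy r 0 with hh | hh | hh
      · simp [Real.sign_of_neg hh]
      · exact absurd hh hr0
      · simp [Real.sign_of_pos hh]
    have e1 : (n : ℝ) ^ (p - 2) ≤ |r| ^ (p - 2) :=
      Real.rpow_le_rpow (by positivity) hcx (by linarith)
    have e2 : (n : ℝ) ^ (p - 1) ≤ |r| ^ (p - 1) :=
      Real.rpow_le_rpow (by positivity) hcx (by linarith)
    have s3 : |r| ^ (p - 2) * |r| = |r| ^ (p - 1) := by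
      rw [← Real.rpow_add_one hx0'.ne' (p - 2)]
      congr 1
      ring
    have hA : 0 ≤ (n : ℝ) ^ (p - 2) * (p * (p - 1)) * (|r| - n) + p * (n : ℝ) ^ (p - 1) := by
      have h6 : 0 ≤ |r| - n := by linarith
      have h7 : (0 : ℝ) ≤ (n : ℝ) ^ (p - 2) := by positivity
      have h8 : (0 : ℝ) ≤ (n : ℝ) ^ (p - 1) := by positivity
      have hA1 : 0 ≤ (n : ℝ) ^ (p - 2) * (p * (p - 1)) * (|r| - n) :=
        mul_nonneg (mul_nonneg h7 (by nlinarith)) h6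
      have hA2 : 0 ≤ p * (n : ℝ) ^ (p - 1) := mul_nonneg (by linarith) h8
      linarith
    have t1 : (n : ℝ) ^ (p - 2) * (|r| - n) ≤ |r| ^ (p - 1) := by
      calc (n : ℝ) ^ (p - 2) * (|r| - n) ≤ |r| ^ (p - 2) * |r| :=
            mul_le_mul e1 (by linarith) (by linarith) (by positivity)
        _ = |r| ^ (p - 1) := s3
    have hB : (n : ℝ) ^ (p - 2) * (p * (p - 1)) * (|r| - n) + p * (n : ℝ) ^ (p - 1)
        ≤ (p + 1) ^ 2 * |r| ^ (p - 1) := by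
      nlinarith [mul_le_mul_of_nonneg_left t1 (by nlinarith : (0:ℝ) ≤ p * (p - 1)),
        mul_le_mul_of_nonneg_left e2 (by linarith : (0:ℝ) ≤ p),
        Real.rpow_nonneg hx0 (p - 1)]
    calc |Real.sign r * ((n : ℝ) ^ (p - 2) * (p * (p - 1)) * (|r| - n) + p * (n : ℝ) ^ (p - 1))|
        = |Real.sign r| * |((n : ℝ) ^ (p - 2) * (p * (p - 1)) * (|r| - n)
          + p * (n : ℝ) ^ (p - 1))| := abs_mul _ _
      _ ≤ 1 * |((n : ℝ) ^ (p - 2) * (p * (p - 1)) * (|r| - n) + p * (n : ℝ) ^ (p - 1))| :=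
          mul_le_mul_of_nonneg_right hs (abs_nonneg _)
      _ = (n : ℝ) ^ (p - 2) * (p * (p - 1)) * (|r| - n) + p * (n : ℝ) ^ (p - 1) := by
          rw [one_mul, abs_of_nonneg hA]
      _ ≤ (p + 1) ^ 2 * |r| ^ (p - 1) := hB

lemma bound_phiDD (p : ℝ) (hp : 2 ≤ p) (n : ℕ) (hn : 1 ≤ n) (r : ℝ) :
    |phiDD p n r| ≤ (p + 1) ^ 2 * |r| ^ (p - 2) := by
  have hc1 : (1 : ℝ) ≤ (n : ℝ) := by exact_mod_cast hn
  have hx0 : (0 : ℝ) ≤ |r| := abs_nonneg r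
  rw [phiDD]
  split_ifs with h
  · rw [abs_of_nonneg (mul_nonneg (by nlinarith : (0:ℝ) ≤ p * (p - 1))
      (Real.rpow_nonneg hx0 _))]
    have hple : p * (p - 1) ≤ (p + 1) ^ 2 := by nlinarith
    exact mul_le_mul_of_nonneg_right hple (Real.rpow_nonneg hx0 _)
  · have hcx : (n : ℝ) ≤ |r| := not_lt.1 h
    have e1 : (n : ℝ) ^ (p - 2) ≤ |r| ^ (p - 2) :=
      Real.rpow_le_rpow (by positivity) hcx (by linarith)
    rw [abs_of_nonneg (mul_nonneg (by positivity : (0:ℝ) ≤ (n:ℝ) ^ (p - 2))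
      (by nlinarith : (0:ℝ) ≤ p * (p - 1)))]
    have hple : p * (p - 1) ≤ (p + 1) ^ 2 := by nlinarith
    nlinarith [mul_le_mul_of_nonneg_right e1 (by nlinarith : (0:ℝ) ≤ p * (p - 1)),
      Real.rpow_nonneg hx0 (p - 2)]

theorem stmt1 (p : ℝ) (hp : 2 ≤ p) :
    ∃ N : ℝ, 0 < N ∧ ∀ n : ℕ, 1 ≤ n → ∀ r : ℝ,
      |phi p n r| ≤ N * |r| ^ p ∧
      |deriv (phi p n) r| ≤ N * |r| ^ (p - 1) ∧
      |deriv (deriv (phi p n)) r| ≤ N * |r| ^ (p - 2) := by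
  refine ⟨(p + 1) ^ 2, by positivity, ?_⟩
  intro n hn r
  have hderiv1 : deriv (phi p n) = phiD p n :=
    funext fun x => (hasDerivAt_phi p hp n hn x).deriv
  have hderiv2 : deriv (deriv (phi p n)) = phiDD p n := by
    rw [hderiv1]
    exact funext fun x => (hasDerivAt_phiD p hp n hn x).deriv
  rw [hderiv2, hderiv1]
  exact ⟨bound_phi p hp n hn r, bound_phiD p hp n hn r, bound_phiDD p hp n hn r⟩
end

section
/- For all r ∈ ℝ and n ≥ 1, one has |r·φ_n'(r)| ≤ p·φ_n(r). -/
open Real Filter Set Topology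

/-- the quadratic extension -/
noncomputable def qq (p : ℝ) (n : ℕ) (x : ℝ) : ℝ :=
  (n : ℝ) ^ (p - 2) * (p * (p - 1) / 2) * (x - n) ^ 2
      + p * (n : ℝ) ^ (p - 1) * (x - n) + (n : ℝ) ^ p

lemma qq_hasDerivAt (p : ℝ) (n : ℕ) (x : ℝ) :
    HasDerivAt (qq p n)
      ((n : ℝ) ^ (p - 2) * (p * (p - 1)) * (x - n) + p * (n : ℝ) ^ (p - 1)) x := by
  have h1 : HasDerivAt (fun x : ℝ => x - (n : ℝ)) 1 x := (hasDerivAt_id x).sub_const _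
  have h2 := (((h1.pow 2).const_mul ((n : ℝ) ^ (p - 2) * (p * (p - 1) / 2))).add
    (h1.const_mul (p * (n : ℝ) ^ (p - 1)))).add_const ((n : ℝ) ^ p)
  refine h2.congr_deriv ?_
  simp
  ring

lemma rpow_mul_self {x : ℝ} (hx : 0 < x) (a : ℝ) : x ^ a * x = x ^ (a + 1) := by
  rw [Real.rpow_add hx, Real.rpow_one]

lemma phi_boundary (p : ℝ) (hp : 2 ≤ p) (n : ℕ) (hn : 1 ≤ n) :
    HasDerivAt (phi p n) (p * (n : ℝ) ^ (p - 1)) (n : ℝ) := by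
  have hn0 : (0 : ℝ) < n := by exact_mod_cast Nat.lt_of_lt_of_le Nat.zero_lt_one hn
  have hleft : HasDerivWithinAt (phi p n) (p * (n : ℝ) ^ (p - 1)) (Iic (n : ℝ)) n := by
    have h := (Real.hasDerivAt_rpow_const (x := (n : ℝ)) (p := p)
      (Or.inr (by linarith))).hasDerivWithinAt (s := Iic (n : ℝ))
    refine h.congr_of_eventuallyEq ?_ ?_
    · have hmem : Ioi (0 : ℝ) ∈ 𝓝[Iic (n : ℝ)] (n : ℝ) :=
        nhdsWithin_le_nhds (Ioi_mem_nhds hn0)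
      filter_upwards [hmem, self_mem_nhdsWithin] with x hx0 hxn
      rcases lt_or_eq_of_le (show x ≤ (n : ℝ) from hxn) with h | h
      · simp [phi, abs_of_pos (show (0:ℝ) < x from hx0), h]
      · simp [phi, h, abs_of_pos hn0]
    · simp [phi, abs_of_pos hn0]
  have hright : HasDerivWithinAt (phi p n) (p * (n : ℝ) ^ (p - 1)) (Ici (n : ℝ)) n := by
    have h := (qq_hasDerivAt p n (n : ℝ)).hasDerivWithinAt (s := Ici (n : ℝ))
    have h' : HasDerivWithinAt (qq p n) (p * (n : ℝ) ^ (p - 1)) (Ici (n : ℝ)) n := by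
      refine h.congr_deriv ?_; ring
    refine h'.congr_of_eventuallyEq ?_ ?_
    · filter_upwards [self_mem_nhdsWithin] with x hxn
      have hx0 : (0 : ℝ) < x := lt_of_lt_of_le hn0 hxn
      simp [phi, qq, abs_of_pos hx0, not_lt.mpr (show (n : ℝ) ≤ x from hxn)]
    · simp [phi, qq, abs_of_pos hn0]
  have := hleft.union hright
  rw [Iic_union_Ici, hasDerivWithinAt_univ] at this
  exact this

lemma stmt3_nonneg (p : ℝ) (hp : 2 ≤ p) (n : ℕ) (hn : 1 ≤ n) (r : ℝ) (hr : 0 ≤ r) :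
    |r * deriv (phi p n) r| ≤ p * phi p n r := by
  have hn0 : (0 : ℝ) < n := by exact_mod_cast Nat.lt_of_lt_of_le Nat.zero_lt_one hn
  have hn1 : (1 : ℝ) ≤ n := by exact_mod_cast hn
  have hp0 : (0 : ℝ) < p := by linarith
  rcases eq_or_lt_of_le hr with rfl | hr0
  · have : phi p n 0 = 0 := by
      simp [phi, hn0, Real.zero_rpow (by linarith : p ≠ 0)]
    rw [this]; simp
  rcases lt_trichotomy r (n : ℝ) with hrn | hrn | hrn
  · -- 0 < r < n : phi = x ^ p near r
    have hev : phi p n =ᶠ[𝓝 r] fun x => x ^ p := by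
      filter_upwards [isOpen_Ioo.mem_nhds (show r ∈ Ioo (0 : ℝ) n from ⟨hr0, hrn⟩)]
        with x ⟨hx0, hxn⟩
      simp [phi, abs_of_pos hx0, hxn]
    rw [hev.deriv_eq, Real.deriv_rpow_const]
    have hphi : phi p n r = r ^ p := by simp [phi, abs_of_pos hr0, hrn]
    have hrp : r ^ (p - 1) * r = r ^ p := by
      rw [rpow_mul_self hr0]; norm_num
    have : r * (p * r ^ (p - 1)) = p * r ^ p := by
      rw [← hrp]; ring
    rw [this, hphi, abs_of_nonneg (by positivity)]
  · -- r = n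
    rw [hrn, (phi_boundary p hp n hn).deriv]
    have hphi : phi p n n = (n : ℝ) ^ p := by simp [phi, abs_of_pos hn0]
    have hrp : (n : ℝ) ^ (p - 1) * n = (n : ℝ) ^ p := by
      rw [rpow_mul_self hn0]; norm_num
    have : (n : ℝ) * (p * (n : ℝ) ^ (p - 1)) = p * (n : ℝ) ^ p := by rw [← hrp]; ring
    rw [this, hphi, abs_of_nonneg (by positivity)]
  · -- r > n : phi = qq near r
    have hev : phi p n =ᶠ[𝓝 r] qq p n := by
      filter_upwards [isOpen_Ioi.mem_nhds (show r ∈ Ioi (n : ℝ) from hrn)] with x hx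
      have hx0 : (0 : ℝ) < x := lt_trans hn0 hx
      simp [phi, qq, abs_of_pos hx0, not_lt.mpr (le_of_lt (show (n : ℝ) < x from hx))]
    rw [hev.deriv_eq, (qq_hasDerivAt p n r).deriv]
    have hphi : phi p n r = qq p n r := by
      have hx0 : (0 : ℝ) < r := lt_trans hn0 hrn
      simp [phi, qq, abs_of_pos hx0, not_lt.mpr (le_of_lt hrn)]
    rw [hphi]
    set A := (n : ℝ) ^ (p - 2) with hA
    have hApos : 0 < A := Real.rpow_pos_of_pos hn0 _
    have hB : (n : ℝ) ^ (p - 1) = A * n := by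
      rw [hA, rpow_mul_self hn0]; ring_nf
    have hC : (n : ℝ) ^ p = A * n * n := by
      rw [hA, rpow_mul_self hn0, rpow_mul_self hn0]; ring_nf
    have hderiv_nonneg : 0 ≤ A * (p * (p - 1)) * (r - n) + p * (n : ℝ) ^ (p - 1) := by
      have h1 : (0:ℝ) ≤ (n : ℝ) ^ (p - 1) := le_of_lt (Real.rpow_pos_of_pos hn0 _)
      have h2 : 0 ≤ A * (p * (p - 1)) * (r - n) :=
        mul_nonneg (mul_nonneg hApos.le (mul_nonneg hp0.le (by linarith))) (by linarith)
      nlinarith [h1, h2]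
    rw [abs_of_nonneg (mul_nonneg (le_of_lt (lt_trans hn0 hrn)) hderiv_nonneg)]
    rw [qq, hB, hC, ← hA]
    have key : 0 ≤ A * p * ((p - 1) * ((p - 2) * (r - n) ^ 2)) :=
      mul_nonneg (mul_nonneg hApos.le hp0.le)
        (mul_nonneg (by linarith) (mul_nonneg (by linarith) (sq_nonneg _)))
    nlinarith [key]

theorem stmt3 (p : ℝ) (hp : 2 ≤ p) (n : ℕ) (hn : 1 ≤ n) (r : ℝ) :
    |r * deriv (phi p n) r| ≤ p * phi p n r := by
  rcases le_or_gt 0 r with hr | hr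
  · exact stmt3_nonneg p hp n hn r hr
  · have heven : phi p n = fun x => phi p n (-x) := by
      funext x; simp [phi, abs_neg]
    have hd : deriv (phi p n) r = -deriv (phi p n) (-r) := by
      conv_lhs => rw [heven]
      exact deriv_comp_neg (phi p n) r
    have h1 : |r * deriv (phi p n) r| = |(-r) * deriv (phi p n) (-r)| := by
      rw [hd]; rw [abs_eq_abs]; left; ring
    have h2 : phi p n r = phi p n (-r) := by simp [phi, abs_neg]
    rw [h1, h2]
    exact stmt3_nonneg p hp n hn (-r) (by linarith)
end

section
/- For p > 2, all r ∈ ℝ and n ≥ 1, one has (φ_n''(r))^{p/(p-2)} ≤ (p(p-1))^{p/(p-2)}·φ_n(r). -/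
open Set Filter Real

noncomputable def psi (p : ℝ) (n : ℕ) (r : ℝ) : ℝ :=
  if |r| < n then p * (r ^ 2) ^ ((p - 2) / 2) * r
  else if 0 < r then (n : ℝ) ^ (p - 2) * (p * (p - 1)) * (r - n) + p * (n : ℝ) ^ (p - 1)
  else -((n : ℝ) ^ (p - 2) * (p * (p - 1)) * (-r - n) + p * (n : ℝ) ^ (p - 1))

noncomputable def gg (p : ℝ) (n : ℕ) (r : ℝ) : ℝ :=
  if |r| < n then p * (p - 1) * (r ^ 2) ^ ((p - 2) / 2)
  else (n : ℝ) ^ (p - 2) * (p * (p - 1))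

lemma sq_rpow_eq (x e : ℝ) : (x ^ 2) ^ e = |x| ^ (2 * e) := by
  rw [← sq_abs, ← Real.rpow_natCast |x| 2, ← Real.rpow_mul (abs_nonneg x)]
  norm_num

lemma hasDerivAt_inner (p : ℝ) (hp : 2 < p) (x : ℝ) :
    HasDerivAt (fun y : ℝ => (y ^ 2) ^ (p / 2)) (p * (x ^ 2) ^ ((p - 2) / 2) * x) x := by
  have h : HasDerivAt (fun y : ℝ => (y ^ 2) ^ (p / 2))
      ((2:ℕ) * x ^ (2 - 1) * (p / 2) * (x ^ 2) ^ (p / 2 - 1)) x :=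
    (hasDerivAt_pow 2 x).rpow_const (Or.inr (by linarith))
  convert h using 1
  rw [show p / 2 - 1 = (p - 2) / 2 by ring]
  push_cast
  ring

lemma hasDerivAt_inner' (p : ℝ) (hp : 2 < p) {x : ℝ} (hx : x ≠ 0) :
    HasDerivAt (fun y : ℝ => p * (y ^ 2) ^ ((p - 2) / 2) * y)
      (p * (p - 1) * (x ^ 2) ^ ((p - 2) / 2)) x := by
  have hx2 : x ^ 2 ≠ 0 := pow_ne_zero 2 hx
  have h1 : HasDerivAt (fun y : ℝ => (y ^ 2) ^ ((p - 2) / 2))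
      ((2:ℕ) * x ^ (2 - 1) * ((p - 2) / 2) * (x ^ 2) ^ ((p - 2) / 2 - 1)) x :=
    (hasDerivAt_pow 2 x).rpow_const (Or.inl hx2)
  have h2 : HasDerivAt (fun y : ℝ => p * (y ^ 2) ^ ((p - 2) / 2) * y) _ x :=
    (h1.const_mul p).mul (hasDerivAt_id x)
  convert h2 using 1
  have key : (x ^ 2) ^ ((p - 2) / 2 - 1) * x ^ 2 = (x ^ 2) ^ ((p - 2) / 2) := by
    rw [← Real.rpow_add_one hx2]
    ring_nf
  simp only [id_eq, mul_one, pow_one]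
  push_cast
  linear_combination (-(p * (p - 2))) * key

lemma hasDerivAt_inner'_zero (p : ℝ) (hp : 2 < p) :
    HasDerivAt (fun y : ℝ => p * (y ^ 2) ^ ((p - 2) / 2) * y) 0 0 := by
  rw [hasDerivAt_iff_tendsto_slope]
  have hc : ContinuousAt (fun y : ℝ => p * (y ^ 2) ^ ((p - 2) / 2)) 0 := by
    apply continuousAt_const.mul
    exact (Real.continuousAt_rpow_const _ _ (Or.inr (by linarith))).comp
      (continuous_pow 2).continuousAt
  have hval : ((0 : ℝ) ^ 2) ^ ((p - 2) / 2) = 0 := by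
    rw [show ((0:ℝ) ^ 2) = 0 by ring, Real.zero_rpow (by intro h; nlinarith)]
  have ht : Filter.Tendsto (fun y : ℝ => p * (y ^ 2) ^ ((p - 2) / 2)) (nhdsWithin 0 {(0:ℝ)}ᶜ) (nhds 0) := by
    have h2 : Filter.Tendsto (fun y : ℝ => p * (y ^ 2) ^ ((p - 2) / 2)) (nhds 0) (nhds (0:ℝ)) := by
      simpa [hval, Real.zero_rpow (show (p-2)/2 ≠ 0 by intro h; nlinarith)] using hc.tendsto
    exact h2.mono_left nhdsWithin_le_nhds
  refine ht.congr' ?_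
  filter_upwards [self_mem_nhdsWithin] with y hy
  have hy0 : y ≠ 0 := hy
  rw [slope_def_field]
  simp only [mul_zero, sub_zero]
  field_simp

lemma hasDerivAt_quad (c d e N x : ℝ) :
    HasDerivAt (fun y : ℝ => c * (y - N) ^ 2 + d * (y - N) + e)
      (2 * c * (x - N) + d) x := by
  have h1 : HasDerivAt (fun y : ℝ => y - N) 1 x := (hasDerivAt_id x).sub_const N
  have h2 : HasDerivAt (fun y : ℝ => c * (y - N) ^ 2 + d * (y - N) + e) _ x :=
    (((h1.pow 2).const_mul c).add (h1.const_mul d)).add_const e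
  convert h2 using 1
  push_cast
  ring

lemma hasDerivAt_quadNeg (c d e N x : ℝ) :
    HasDerivAt (fun y : ℝ => c * (-y - N) ^ 2 + d * (-y - N) + e)
      (-(2 * c * (-x - N) + d)) x := by
  have h1 : HasDerivAt (fun y : ℝ => -y - N) (-1) x := ((hasDerivAt_id x).neg).sub_const N
  have h2 : HasDerivAt (fun y : ℝ => c * (-y - N) ^ 2 + d * (-y - N) + e) _ x :=
    (((h1.pow 2).const_mul c).add (h1.const_mul d)).add_const e
  convert h2 using 1
  push_cast
  ring

lemma rpow_sq_helper (p : ℝ) {N : ℝ} (hN : 0 < N) : (N ^ 2) ^ ((p - 2) / 2) = N ^ (p - 2) := by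
  rw [sq_rpow_eq, abs_of_pos hN, show 2 * ((p - 2) / 2) = p - 2 by ring]

lemma rpow_step (p : ℝ) {N : ℝ} (hN : 0 < N) : N ^ (p - 2) * N = N ^ (p - 1) := by
  rw [← Real.rpow_add_one hN.ne']
  ring_nf

lemma phi_eq_inner {p : ℝ} {n : ℕ} (hn : 1 ≤ n) {x : ℝ} (h1 : -(n : ℝ) ≤ x) (h2 : x ≤ n) :
    phi p n x = (x ^ 2) ^ (p / 2) := by
  have hN0 : (0 : ℝ) < n := by
    have : (1 : ℝ) ≤ n := by exact_mod_cast hn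
    linarith
  by_cases h : |x| < n
  · simp only [phi, if_pos h]
    rw [sq_rpow_eq, show 2 * (p / 2) = p by ring]
  · have hxn : |x| = n := le_antisymm (abs_le.2 ⟨by linarith, h2⟩) (not_lt.1 h)
    have hxx : x ^ 2 = (n : ℝ) ^ 2 := by rw [← sq_abs, hxn]
    simp only [phi, if_neg h]
    rw [hxn, hxx, sq_rpow_eq, abs_of_pos hN0, show 2 * (p / 2) = p by ring]
    ring

lemma phi_eq_pos {p : ℝ} {n : ℕ} {x : ℝ} (hx : (n : ℝ) ≤ x) :
    phi p n x = (n : ℝ) ^ (p - 2) * (p * (p - 1) / 2) * (x - n) ^ 2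
      + p * (n : ℝ) ^ (p - 1) * (x - n) + (n : ℝ) ^ p := by
  have h0 : (0 : ℝ) ≤ x := le_trans (n.cast_nonneg) hx
  have ha : |x| = x := abs_of_nonneg h0
  simp only [phi, ha, if_neg (not_lt.2 hx)]

lemma phi_eq_neg {p : ℝ} {n : ℕ} {x : ℝ} (hx : x ≤ -(n : ℝ)) :
    phi p n x = (n : ℝ) ^ (p - 2) * (p * (p - 1) / 2) * (-x - n) ^ 2
      + p * (n : ℝ) ^ (p - 1) * (-x - n) + (n : ℝ) ^ p := by
  have h0 : x ≤ 0 := le_trans hx (neg_nonpos.2 n.cast_nonneg)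
  have ha : |x| = -x := abs_of_nonpos h0
  have hno : ¬ |x| < n := by rw [ha]; push_neg; linarith
  simp only [phi, if_neg hno]
  rw [ha]

lemma psi_eq_inner {p : ℝ} {n : ℕ} (hn : 1 ≤ n) {x : ℝ} (h1 : -(n : ℝ) ≤ x) (h2 : x ≤ n) :
    psi p n x = p * (x ^ 2) ^ ((p - 2) / 2) * x := by
  have hN0 : (0 : ℝ) < n := by
    have : (1 : ℝ) ≤ n := by exact_mod_cast hn
    linarith
  by_cases h : |x| < n
  · simp only [psi, if_pos h]
  · have hxn : |x| = n := le_antisymm (abs_le.2 ⟨by linarith, h2⟩) (not_lt.1 h)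
    have hsq : ((n:ℝ) ^ 2) ^ ((p - 2) / 2) = (n:ℝ) ^ (p - 2) := rpow_sq_helper p hN0
    have hst : (n:ℝ) ^ (p - 2) * n = (n:ℝ) ^ (p - 1) := rpow_step p hN0
    rcases (abs_eq (le_of_lt hN0)).1 hxn with hx | hx <;> subst hx
    · simp only [psi, if_neg h, if_pos hN0]
      rw [hsq]
      linear_combination (-p) * hst
    · simp only [psi, if_neg h, if_neg (by push_neg; linarith : ¬ (0:ℝ) < -(n:ℝ))]
      rw [show (-(n:ℝ)) ^ 2 = (n:ℝ) ^ 2 by ring, hsq]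
      linear_combination p * hst

lemma phi_hasDerivAt (p : ℝ) (hp : 2 < p) (n : ℕ) (hn : 1 ≤ n) (r : ℝ) :
    HasDerivAt (phi p n) (psi p n r) r := by
  have hN1 : (1 : ℝ) ≤ n := by exact_mod_cast hn
  have hN0 : (0 : ℝ) < n := by linarith
  have hsq : ((n : ℝ) ^ 2) ^ ((p - 2) / 2) = (n : ℝ) ^ (p - 2) := rpow_sq_helper p hN0
  have hst : (n : ℝ) ^ (p - 2) * n = (n : ℝ) ^ (p - 1) := rpow_step p hN0
  by_cases h : |r| < (n : ℝ)
  · have heq : phi p n =ᶠ[nhds r] fun y => (y ^ 2) ^ (p / 2) := by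
      have hopen : IsOpen {x : ℝ | |x| < (n : ℝ)} := isOpen_lt continuous_abs continuous_const
      filter_upwards [hopen.mem_nhds h] with x hx
      exact phi_eq_inner hn (le_of_lt (abs_lt.1 hx).1) (le_of_lt (abs_lt.1 hx).2)
    have h2 := (hasDerivAt_inner p hp r).congr_of_eventuallyEq heq
    simpa [psi, if_pos h] using h2
  · push_neg at h
    rcases le_or_gt r 0 with hr0 | hr0
    · have habs : |r| = -r := abs_of_nonpos hr0
      have hrn : r ≤ -(n : ℝ) := by rw [habs] at h; linarith
      have hpsi : psi p n r
          = -((n : ℝ) ^ (p - 2) * (p * (p - 1)) * (-r - n) + p * (n : ℝ) ^ (p - 1)) := by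
        simp only [psi, if_neg (not_lt.2 h), if_neg (not_lt.2 hr0)]
      rcases eq_or_lt_of_le hrn with he | hlt
      · subst he
        have hIic : HasDerivWithinAt (phi p n) (-(p * (n : ℝ) ^ (p - 1)))
            (Iic (-(n : ℝ))) (-(n : ℝ)) := by
          have hq := hasDerivAt_quadNeg ((n : ℝ) ^ (p - 2) * (p * (p - 1) / 2))
            (p * (n : ℝ) ^ (p - 1)) ((n : ℝ) ^ p) (n : ℝ) (-(n : ℝ))
          have hq' : HasDerivAt (fun y : ℝ => (n : ℝ) ^ (p - 2) * (p * (p - 1) / 2) * (-y - n) ^ 2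
              + p * (n : ℝ) ^ (p - 1) * (-y - n) + (n : ℝ) ^ p)
              (-(p * (n : ℝ) ^ (p - 1))) (-(n : ℝ)) := by
            convert hq using 1
            ring
          exact hq'.hasDerivWithinAt.congr (fun x hx => phi_eq_neg hx) (phi_eq_neg le_rfl)
        have hIci : HasDerivWithinAt (phi p n) (-(p * (n : ℝ) ^ (p - 1)))
            (Ici (-(n : ℝ))) (-(n : ℝ)) := by
          have hq' : HasDerivAt (fun y : ℝ => (y ^ 2) ^ (p / 2))
              (-(p * (n : ℝ) ^ (p - 1))) (-(n : ℝ)) := by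
            convert hasDerivAt_inner p hp (-(n : ℝ)) using 1
            rw [show (-(n : ℝ)) ^ 2 = (n : ℝ) ^ 2 by ring, hsq]
            linear_combination p * hst
          refine hq'.hasDerivWithinAt.congr_of_eventuallyEq ?_ ?_
          · filter_upwards [nhdsWithin_le_nhds (Iio_mem_nhds (by linarith : -(n : ℝ) < n)),
              self_mem_nhdsWithin] with x hx1 hx2
            exact phi_eq_inner hn hx2 (le_of_lt hx1)
          · exact phi_eq_inner hn le_rfl (by linarith)
        have hu := hIic.union hIci
        rw [Iic_union_Ici] at hu
        have hd := hasDerivWithinAt_univ.1 hu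
        refine hd.congr_deriv (Eq.symm ?_)
        rw [hpsi]
        ring
      · have heq : phi p n =ᶠ[nhds r] fun y => (n : ℝ) ^ (p - 2) * (p * (p - 1) / 2) * (-y - n) ^ 2
            + p * (n : ℝ) ^ (p - 1) * (-y - n) + (n : ℝ) ^ p := by
          filter_upwards [Iio_mem_nhds hlt] with x hx
          exact phi_eq_neg (le_of_lt hx)
        have h2 := (hasDerivAt_quadNeg ((n : ℝ) ^ (p - 2) * (p * (p - 1) / 2))
          (p * (n : ℝ) ^ (p - 1)) ((n : ℝ) ^ p) (n : ℝ) r).congr_of_eventuallyEq heq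
        refine h2.congr_deriv (Eq.symm ?_)
        rw [hpsi]
        ring
    · have habs : |r| = r := abs_of_pos hr0
      have hrn : (n : ℝ) ≤ r := by rw [habs] at h; exact h
      have hpsi : psi p n r
          = (n : ℝ) ^ (p - 2) * (p * (p - 1)) * (r - n) + p * (n : ℝ) ^ (p - 1) := by
        simp only [psi, if_neg (not_lt.2 h), if_pos hr0]
      rcases eq_or_lt_of_le hrn with he | hlt
      · subst he
        have hIci : HasDerivWithinAt (phi p n) (p * (n : ℝ) ^ (p - 1))
            (Ici ((n : ℝ))) ((n : ℝ)) := by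
          have hq := hasDerivAt_quad ((n : ℝ) ^ (p - 2) * (p * (p - 1) / 2))
            (p * (n : ℝ) ^ (p - 1)) ((n : ℝ) ^ p) (n : ℝ) ((n : ℝ))
          have hq' : HasDerivAt (fun y : ℝ => (n : ℝ) ^ (p - 2) * (p * (p - 1) / 2) * (y - n) ^ 2
              + p * (n : ℝ) ^ (p - 1) * (y - n) + (n : ℝ) ^ p)
              (p * (n : ℝ) ^ (p - 1)) ((n : ℝ)) := by
            convert hq using 1
            ring
          exact hq'.hasDerivWithinAt.congr (fun x hx => phi_eq_pos hx) (phi_eq_pos le_rfl)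
        have hIic : HasDerivWithinAt (phi p n) (p * (n : ℝ) ^ (p - 1))
            (Iic ((n : ℝ))) ((n : ℝ)) := by
          have hq' : HasDerivAt (fun y : ℝ => (y ^ 2) ^ (p / 2))
              (p * (n : ℝ) ^ (p - 1)) ((n : ℝ)) := by
            convert hasDerivAt_inner p hp ((n : ℝ)) using 1
            rw [hsq]
            linear_combination (-p) * hst
          refine hq'.hasDerivWithinAt.congr_of_eventuallyEq ?_ ?_
          · filter_upwards [nhdsWithin_le_nhds (Ioi_mem_nhds (by linarith : -(n : ℝ) < n)),
              self_mem_nhdsWithin] with x hx1 hx2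
            exact phi_eq_inner hn (le_of_lt hx1) hx2
          · exact phi_eq_inner hn (by linarith) le_rfl
        have hu := hIic.union hIci
        rw [Iic_union_Ici] at hu
        have hd := hasDerivWithinAt_univ.1 hu
        refine hd.congr_deriv (Eq.symm ?_)
        rw [hpsi]
        ring
      · have heq : phi p n =ᶠ[nhds r] fun y => (n : ℝ) ^ (p - 2) * (p * (p - 1) / 2) * (y - n) ^ 2
            + p * (n : ℝ) ^ (p - 1) * (y - n) + (n : ℝ) ^ p := by
          filter_upwards [Ioi_mem_nhds hlt] with x hx
          exact phi_eq_pos (le_of_lt hx)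
        have h2 := (hasDerivAt_quad ((n : ℝ) ^ (p - 2) * (p * (p - 1) / 2))
          (p * (n : ℝ) ^ (p - 1)) ((n : ℝ) ^ p) (n : ℝ) r).congr_of_eventuallyEq heq
        refine h2.congr_deriv (Eq.symm ?_)
        rw [hpsi]
        ring

lemma psi_hasDerivAt (p : ℝ) (hp : 2 < p) (n : ℕ) (hn : 1 ≤ n) (r : ℝ) :
    HasDerivAt (psi p n) (gg p n r) r := by
  have hN1 : (1 : ℝ) ≤ n := by exact_mod_cast hn
  have hN0 : (0 : ℝ) < n := by linarith
  have hsq : ((n : ℝ) ^ 2) ^ ((p - 2) / 2) = (n : ℝ) ^ (p - 2) := rpow_sq_helper p hN0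
  have hlin : ∀ x : ℝ, HasDerivAt
      (fun y : ℝ => (n : ℝ) ^ (p - 2) * (p * (p - 1)) * (y - n) + p * (n : ℝ) ^ (p - 1))
      ((n : ℝ) ^ (p - 2) * (p * (p - 1))) x := by
    intro x
    have h1 : HasDerivAt
        (fun y : ℝ => (n : ℝ) ^ (p - 2) * (p * (p - 1)) * (y - n) + p * (n : ℝ) ^ (p - 1)) _ x :=
      (((hasDerivAt_id x).sub_const ((n : ℝ))).const_mul
      ((n : ℝ) ^ (p - 2) * (p * (p - 1)))).add_const (p * (n : ℝ) ^ (p - 1))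
    convert h1 using 1
    ring
  have hlinN : ∀ x : ℝ, HasDerivAt
      (fun y : ℝ => -((n : ℝ) ^ (p - 2) * (p * (p - 1)) * (-y - n) + p * (n : ℝ) ^ (p - 1)))
      ((n : ℝ) ^ (p - 2) * (p * (p - 1))) x := by
    intro x
    have h1 : HasDerivAt
        (fun y : ℝ => -((n : ℝ) ^ (p - 2) * (p * (p - 1)) * (-y - n) + p * (n : ℝ) ^ (p - 1))) _ x :=
      (((((hasDerivAt_id x).neg).sub_const ((n : ℝ))).const_mul
      ((n : ℝ) ^ (p - 2) * (p * (p - 1)))).add_const (p * (n : ℝ) ^ (p - 1))).neg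
    convert h1 using 1
    ring
  have hpsiPos : ∀ x : ℝ, (n : ℝ) ≤ x → psi p n x
      = (n : ℝ) ^ (p - 2) * (p * (p - 1)) * (x - n) + p * (n : ℝ) ^ (p - 1) := by
    intro x hx
    have hx0 : (0 : ℝ) < x := lt_of_lt_of_le hN0 hx
    have hno : ¬ |x| < n := by rw [abs_of_pos hx0]; push_neg; exact hx
    simp only [psi, if_neg hno, if_pos hx0]
  have hpsiNeg : ∀ x : ℝ, x ≤ -(n : ℝ) → psi p n x
      = -((n : ℝ) ^ (p - 2) * (p * (p - 1)) * (-x - n) + p * (n : ℝ) ^ (p - 1)) := by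
    intro x hx
    have hx0 : x ≤ 0 := by linarith
    have hno : ¬ |x| < n := by rw [abs_of_nonpos hx0]; push_neg; linarith
    simp only [psi, if_neg hno, if_neg (not_lt.2 hx0)]
  by_cases h : |r| < (n : ℝ)
  · have heq : psi p n =ᶠ[nhds r] fun y => p * (y ^ 2) ^ ((p - 2) / 2) * y := by
      have hopen : IsOpen {x : ℝ | |x| < (n : ℝ)} := isOpen_lt continuous_abs continuous_const
      filter_upwards [hopen.mem_nhds h] with x hx
      exact psi_eq_inner hn (le_of_lt (abs_lt.1 hx).1) (le_of_lt (abs_lt.1 hx).2)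
    by_cases hr : r = 0
    · subst hr
      have h2 := (hasDerivAt_inner'_zero p hp).congr_of_eventuallyEq heq
      refine h2.congr_deriv (Eq.symm ?_)
      simp only [gg, if_pos h]
      rw [show ((0 : ℝ) ^ 2) = 0 by ring, Real.zero_rpow (by intro hc; nlinarith), mul_zero]
    · have h2 := (hasDerivAt_inner' p hp hr).congr_of_eventuallyEq heq
      simpa [gg, if_pos h] using h2
  · push_neg at h
    rcases le_or_gt r 0 with hr0 | hr0
    · have habs : |r| = -r := abs_of_nonpos hr0
      have hrn : r ≤ -(n : ℝ) := by rw [habs] at h; linarith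
      rcases eq_or_lt_of_le hrn with he | hlt
      · subst he
        have hIic : HasDerivWithinAt (psi p n) ((n : ℝ) ^ (p - 2) * (p * (p - 1)))
            (Iic (-(n : ℝ))) (-(n : ℝ)) :=
          (hlinN _).hasDerivWithinAt.congr (fun x hx => hpsiNeg x hx) (hpsiNeg _ le_rfl)
        have hIci : HasDerivWithinAt (psi p n) ((n : ℝ) ^ (p - 2) * (p * (p - 1)))
            (Ici (-(n : ℝ))) (-(n : ℝ)) := by
          have hq' : HasDerivAt (fun y : ℝ => p * (y ^ 2) ^ ((p - 2) / 2) * y)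
              ((n : ℝ) ^ (p - 2) * (p * (p - 1))) (-(n : ℝ)) := by
            convert hasDerivAt_inner' p hp (show -(n : ℝ) ≠ 0 by linarith) using 1
            rw [show (-(n : ℝ)) ^ 2 = (n : ℝ) ^ 2 by ring, hsq]
            ring
          refine hq'.hasDerivWithinAt.congr_of_eventuallyEq ?_ ?_
          · filter_upwards [nhdsWithin_le_nhds (Iio_mem_nhds (by linarith : -(n : ℝ) < n)),
              self_mem_nhdsWithin] with x hx1 hx2
            exact psi_eq_inner hn hx2 (le_of_lt hx1)
          · exact psi_eq_inner hn le_rfl (by linarith)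
        have hu := hIic.union hIci
        rw [Iic_union_Ici] at hu
        have hd := hasDerivWithinAt_univ.1 hu
        have hgg : gg p n (-(n : ℝ)) = (n : ℝ) ^ (p - 2) * (p * (p - 1)) := by
          simp only [gg, if_neg (not_lt.2 h)]
        rw [hgg]
        exact hd
      · have heq : psi p n =ᶠ[nhds r]
            fun y => -((n : ℝ) ^ (p - 2) * (p * (p - 1)) * (-y - n) + p * (n : ℝ) ^ (p - 1)) := by
          filter_upwards [Iio_mem_nhds hlt] with x hx
          exact hpsiNeg x (le_of_lt hx)
        have h2 := (hlinN r).congr_of_eventuallyEq heq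
        have hgg : gg p n r = (n : ℝ) ^ (p - 2) * (p * (p - 1)) := by
          simp only [gg, if_neg (not_lt.2 h)]
        rw [hgg]
        exact h2
    · have habs : |r| = r := abs_of_pos hr0
      have hrn : (n : ℝ) ≤ r := by rw [habs] at h; exact h
      rcases eq_or_lt_of_le hrn with he | hlt
      · subst he
        have hIci : HasDerivWithinAt (psi p n) ((n : ℝ) ^ (p - 2) * (p * (p - 1)))
            (Ici ((n : ℝ))) ((n : ℝ)) :=
          (hlin _).hasDerivWithinAt.congr (fun x hx => hpsiPos x hx) (hpsiPos _ le_rfl)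
        have hIic : HasDerivWithinAt (psi p n) ((n : ℝ) ^ (p - 2) * (p * (p - 1)))
            (Iic ((n : ℝ))) ((n : ℝ)) := by
          have hq' : HasDerivAt (fun y : ℝ => p * (y ^ 2) ^ ((p - 2) / 2) * y)
              ((n : ℝ) ^ (p - 2) * (p * (p - 1))) ((n : ℝ)) := by
            convert hasDerivAt_inner' p hp (show (n : ℝ) ≠ 0 by linarith) using 1
            rw [hsq]
            ring
          refine hq'.hasDerivWithinAt.congr_of_eventuallyEq ?_ ?_
          · filter_upwards [nhdsWithin_le_nhds (Ioi_mem_nhds (by linarith : -(n : ℝ) < n)),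
              self_mem_nhdsWithin] with x hx1 hx2
            exact psi_eq_inner hn (le_of_lt hx1) hx2
          · exact psi_eq_inner hn (by linarith) le_rfl
        have hu := hIic.union hIci
        rw [Iic_union_Ici] at hu
        have hd := hasDerivWithinAt_univ.1 hu
        have hgg : gg p n ((n : ℝ)) = (n : ℝ) ^ (p - 2) * (p * (p - 1)) := by
          simp only [gg, if_neg (not_lt.2 h)]
        rw [hgg]
        exact hd
      · have heq : psi p n =ᶠ[nhds r]
            fun y => (n : ℝ) ^ (p - 2) * (p * (p - 1)) * (y - n) + p * (n : ℝ) ^ (p - 1) := by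
          filter_upwards [Ioi_mem_nhds hlt] with x hx
          exact hpsiPos x (le_of_lt hx)
        have h2 := (hlin r).congr_of_eventuallyEq heq
        have hgg : gg p n r = (n : ℝ) ^ (p - 2) * (p * (p - 1)) := by
          simp only [gg, if_neg (not_lt.2 h)]
        rw [hgg]
        exact h2

theorem stmt5 (p : ℝ) (hp : 2 < p) (n : ℕ) (hn : 1 ≤ n) (r : ℝ) :
    (deriv (deriv (phi p n)) r) ^ (p / (p - 2)) ≤
      (p * (p - 1)) ^ (p / (p - 2)) * phi p n r := by
  have hN1 : (1 : ℝ) ≤ n := by exact_mod_cast hn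
  have hN0 : (0 : ℝ) < n := by linarith
  have hpp : (0 : ℝ) ≤ p * (p - 1) := by nlinarith
  have hd1 : deriv (phi p n) = psi p n := funext fun x => (phi_hasDerivAt p hp n hn x).deriv
  rw [hd1, (psi_hasDerivAt p hp n hn r).deriv]
  have hp2 : p - 2 ≠ 0 := by linarith
  by_cases h : |r| < (n : ℝ)
  · simp only [gg, phi, if_pos h]
    have hA : (0 : ℝ) ≤ (r ^ 2) ^ ((p - 2) / 2) := Real.rpow_nonneg (sq_nonneg r) _
    have hEq : ((r ^ 2) ^ ((p - 2) / 2)) ^ (p / (p - 2)) = |r| ^ p := by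
      rw [← Real.rpow_mul (sq_nonneg r),
        show (p - 2) / 2 * (p / (p - 2)) = p / 2 by field_simp,
        sq_rpow_eq, show 2 * (p / 2) = p by ring]
    rw [Real.mul_rpow hpp hA, hEq]
  · simp only [gg, phi, if_neg h]
    push_neg at h
    have key : ((n : ℝ) ^ (p - 2) * (p * (p - 1))) ^ (p / (p - 2))
        = (p * (p - 1)) ^ (p / (p - 2)) * (n : ℝ) ^ p := by
      rw [Real.mul_rpow (Real.rpow_nonneg hN0.le _) hpp, ← Real.rpow_mul hN0.le,
        show (p - 2) * (p / (p - 2)) = p by field_simp, mul_comm]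
    rw [key]
    have h1 : (0 : ℝ) ≤ |r| - n := by linarith
    have ht1 : (0 : ℝ) ≤ (n : ℝ) ^ (p - 2) * (p * (p - 1) / 2) * (|r| - n) ^ 2 := by positivity
    have ht2 : (0 : ℝ) ≤ p * (n : ℝ) ^ (p - 1) * (|r| - n) := by
      have hnn : (0 : ℝ) ≤ (n : ℝ) ^ (p - 1) := (Real.rpow_pos_of_pos hN0 _).le
      exact mul_nonneg (mul_nonneg (by linarith) hnn) h1
    have hq : (0 : ℝ) ≤ (p * (p - 1)) ^ (p / (p - 2)) := Real.rpow_nonneg hpp _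
    nlinarith [mul_le_mul_of_nonneg_left (show (n:ℝ)^p ≤ (n : ℝ) ^ (p - 2) * (p * (p - 1) / 2) * (|r| - n) ^ 2 + p * (n : ℝ) ^ (p - 1) * (|r| - n) + (n:ℝ)^p by linarith) hq]
end
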